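/- Let κ ∈ (0,1), N ≥ 2, ε > 0 with κ/2 - ε > 0. Define τ_p for p ∈ 2πℤ³ \ {0} by tanh(2τ_p) = -8π𝔞N^κ/(p² + 8π𝔞N^κ) where 𝔞 > 0 is a constant, and let σ_p = sinh(τ_p). Then on the set P_S = {p : N^{κ/2-ε} ≤ |p| ≤ N^{κ/2+ε}} one has Σ_{p ∈ P_S} σ_p² ≤ C N^{3κ/2} for a constant C depending only on 𝔞. -/

import Mathlib

open scoped Real

/-- The lattice point `2π p ∈ 2πℤ³ ⊂ ℝ³` associated to `p : ℤ³`. -/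
noncomputable def latticePoint (p : Fin 3 → ℤ) : EuclideanSpace ℝ (Fin 3) :=
  (WithLp.equiv 2 (Fin 3 → ℝ)).symm (fun i => 2 * Real.pi * (p i))

/-- The sup norm of a lattice point. -/
def Mm (p : Fin 3 → ℤ) : ℕ := Finset.univ.sup fun i => (p i).natAbs

/-- The box of side `2b+1`. -/
noncomputable def box (b : ℕ) : Finset (Fin 3 → ℤ) := Fintype.piFinset fun _ => Finset.Icc (-(b : ℤ)) b

lemma mem_box {p : Fin 3 → ℤ} {b : ℕ} : p ∈ box b ↔ Mm p ≤ b := by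
  simp only [box, Fintype.mem_piFinset, Finset.mem_Icc, Mm, Finset.sup_le_iff,
    Finset.mem_univ, true_implies]
  exact forall_congr' fun i => by omega

lemma card_box (b : ℕ) : (box b).card = (2 * b + 1) ^ 3 := by
  simp only [box, Fintype.card_piFinset, Int.card_Icc]
  rw [Finset.prod_const]
  norm_num
  omega

lemma norm_latticePoint_sq (p : Fin 3 → ℤ) :
    ‖latticePoint p‖ ^ 2 = ∑ i, (2 * Real.pi * (p i : ℝ)) ^ 2 := by
  rw [EuclideanSpace.norm_eq, Real.sq_sqrt (by positivity)]
  refine Finset.sum_congr rfl fun i _ => ?_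
  rw [latticePoint]
  change ‖(2 * Real.pi * (p i : ℝ))‖ ^ 2 = _
  rw [Real.norm_eq_abs, sq_abs]

lemma Mm_sq_le (p : Fin 3 → ℤ) : ((Mm p : ℝ)) ^ 2 ≤ ‖latticePoint p‖ ^ 2 := by
  obtain ⟨i, -, hi⟩ := Finset.exists_mem_eq_sup Finset.univ Finset.univ_nonempty
    (fun i => (p i).natAbs)
  rw [norm_latticePoint_sq, Mm, hi]
  have h1 : ((p i).natAbs : ℝ) ^ 2 = ((p i : ℝ)) ^ 2 := by
    rw [Nat.cast_natAbs, Int.cast_abs, sq_abs]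
  rw [h1]
  have h2 : ((p i : ℝ)) ^ 2 ≤ (2 * Real.pi * (p i : ℝ)) ^ 2 := by
    have h9 : (9 : ℝ) < Real.pi ^ 2 := by nlinarith [Real.pi_gt_three]
    nlinarith [sq_nonneg (p i : ℝ)]
  calc ((p i : ℝ)) ^ 2 ≤ (2 * Real.pi * (p i : ℝ)) ^ 2 := h2
    _ ≤ ∑ j, (2 * Real.pi * (p j : ℝ)) ^ 2 :=
        Finset.single_le_sum (f := fun j => (2 * Real.pi * (p j : ℝ)) ^ 2)
          (fun j _ => sq_nonneg _) (Finset.mem_univ i)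

lemma Mm_pos {p : Fin 3 → ℤ} (hp : p ≠ 0) : 1 ≤ Mm p := by
  have : ∃ i, p i ≠ 0 := by
    by_contra h
    push_neg at h
    exact hp (funext fun i => h i)
  obtain ⟨i, hi⟩ := this
  have h1 : 1 ≤ (p i).natAbs := by omega
  exact le_trans h1 (Finset.le_sup (f := fun j => (p j).natAbs) (Finset.mem_univ i))

/-- The shell counting bound via induction on the box radius. -/
lemma sum_box_le (h : ℕ → ℝ) (hh : ∀ m, 0 ≤ h m) :
    ∀ B : ℕ, ∑ p ∈ box B \ box 0, h (Mm p) ≤ ∑ m ∈ Finset.Ioc 0 B, 26 * (m : ℝ) ^ 2 * h m := by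
  intro B
  induction B with
  | zero => simp
  | succ B ih =>
    have hdecomp : box (B + 1) \ box 0 = (box (B + 1) \ box B) ∪ (box B \ box 0) := by
      ext p
      simp only [Finset.mem_sdiff, Finset.mem_union, mem_box]
      omega
    have hdisj : Disjoint (box (B + 1) \ box B) (box B \ box 0) := by
      rw [Finset.disjoint_left]
      intro p hp hq
      simp only [Finset.mem_sdiff, mem_box] at hp hq
      omega
    rw [hdecomp, Finset.sum_union hdisj, Finset.sum_Ioc_succ_top (Nat.zero_le B)]
    have hshell : ∑ p ∈ box (B + 1) \ box B, h (Mm p) ≤ 26 * ((B + 1 : ℕ) : ℝ) ^ 2 * h (B + 1) := by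
      have hval : ∀ p ∈ box (B + 1) \ box B, h (Mm p) = h (B + 1) := by
        intro p hp
        simp only [Finset.mem_sdiff, mem_box] at hp
        congr 1
        omega
      rw [Finset.sum_congr rfl hval, Finset.sum_const, nsmul_eq_mul]
      have hcard : ((box (B + 1) \ box B).card : ℝ) ≤ 26 * ((B + 1 : ℕ) : ℝ) ^ 2 := by
        have hsub : box B ⊆ box (B + 1) := fun p hp => by
          rw [mem_box] at *; omega
        rw [Finset.card_sdiff_of_subset hsub, card_box, card_box]
        have : (2 * (B + 1) + 1) ^ 3 - (2 * B + 1) ^ 3 ≤ 26 * (B + 1) ^ 2 := by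
          have hle : (2 * B + 1) ^ 3 ≤ (2 * (B + 1) + 1) ^ 3 := Nat.pow_le_pow_left (by omega) 3
          zify [hle]
          nlinarith [Int.natCast_nonneg B]
        calc (((2 * (B + 1) + 1) ^ 3 - (2 * B + 1) ^ 3 : ℕ) : ℝ)
            ≤ ((26 * (B + 1) ^ 2 : ℕ) : ℝ) := by exact_mod_cast this
          _ = 26 * ((B + 1 : ℕ) : ℝ) ^ 2 := by push_cast; ring
      exact mul_le_mul_of_nonneg_right hcard (hh _)
    have : ∑ p ∈ box B \ box 0, h (Mm p) ≤ ∑ m ∈ Finset.Ioc 0 B, 26 * (m : ℝ) ^ 2 * h m := ih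
    push_cast at hshell ⊢
    linarith

/-- Tail bound for `∑ 1/m²`. -/
lemma sum_Ioc_inv_sq_le (K : ℕ) (hK : 1 ≤ K) :
    ∀ R : ℕ, ∑ m ∈ Finset.Ioc K R, (1 : ℝ) / (m : ℝ) ^ 2 ≤ 1 / K - 1 / (max K R) := by
  intro R
  induction R with
  | zero => simp [Nat.le_zero]
  | succ R ih =>
    rcases le_or_gt (R + 1) K with hle | hlt
    · rw [Finset.Ioc_eq_empty (by omega)]
      simp only [Finset.sum_empty]
      have h1 : (K : ℝ) ≤ (max K (R + 1) : ℕ) := by exact_mod_cast Nat.le_max_left K (R + 1)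
      have h2 : (0 : ℝ) < K := by exact_mod_cast hK
      have h3 : (0 : ℝ) < (max K (R + 1) : ℕ) := by positivity
      have := one_div_le_one_div_of_le h2 h1
      linarith
    · have hKR : K ≤ R := by omega
      rw [Finset.sum_Ioc_succ_top hKR]
      have hmax1 : max K R = R := Nat.max_eq_right hKR
      have hmax2 : max K (R + 1) = R + 1 := Nat.max_eq_right (by omega)
      rw [hmax1] at ih
      rw [hmax2]
      have hR : (0 : ℝ) < R := by exact_mod_cast lt_of_lt_of_le hK hKR
      have hR1 : (0 : ℝ) < (R : ℝ) + 1 := by linarith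
      have key : (1 : ℝ) / ((R + 1 : ℕ) : ℝ) ^ 2 ≤ 1 / R - 1 / ((R + 1 : ℕ) : ℝ) := by
        push_cast
        rw [div_sub_div _ _ (ne_of_gt hR) (ne_of_gt hR1), div_le_div_iff₀ (by positivity) (by positivity)]
        ring_nf
        nlinarith
      push_cast at ih key ⊢
      linarith

/-- The bounding function. -/
noncomputable def bfun (x : ℝ) (m : ℕ) : ℝ := min x (x ^ 2 / (m : ℝ) ^ 2) / (m : ℝ) ^ 2

/-- The key hyperbolic estimate. -/
lemma sinh_sq_est {x a τ : ℝ} (hx : 0 < x) (ha : 0 < a)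
    (ht : Real.tanh (2 * τ) = -x / (a + x)) :
    Real.sinh τ ^ 2 ≤ x / (2 * a) ∧ Real.sinh τ ^ 2 ≤ x ^ 2 / (4 * a ^ 2) := by
  have hax : 0 < a + x := by linarith
  set c := Real.cosh (2 * τ) with hc
  have hcpos : 0 < c := by rw [hc]; exact Real.cosh_pos _
  have hs : Real.sinh (2 * τ) = (-x / (a + x)) * c := by
    rw [← ht, Real.tanh_eq_sinh_div_cosh]
    field_simp
    rw [hc]
  have hid : c ^ 2 - Real.sinh (2 * τ) ^ 2 = 1 := Real.cosh_sq_sub_sinh_sq (2 * τ)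
  rw [hs] at hid
  have key : c ^ 2 * (a ^ 2 + 2 * a * x) = (a + x) ^ 2 := by
    field_simp at hid
    nlinarith [hid]
  have haa : (0 : ℝ) < a ^ 2 + 2 * a * x := by positivity
  have hca : a * c ≤ a + x := by
    nlinarith [key, mul_pos hcpos hcpos, mul_pos ha hx, mul_pos ha hcpos, sq_nonneg c]
  have h4 : (2 * a ^ 2 * c) ^ 2 ≤ (2 * a ^ 2 + x ^ 2) ^ 2 := by
    nlinarith [key, haa, mul_pos (mul_pos (mul_pos ha ha) ha) (mul_pos (mul_pos hx hx) hx),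
      mul_pos (mul_pos ha ha) (mul_pos (mul_pos hx hx) (mul_pos hx hx)),
      mul_pos ha (mul_pos (mul_pos (mul_pos hx hx) (mul_pos hx hx)) hx), sq_nonneg c]
  have hca2 : 2 * a ^ 2 * c ≤ 2 * a ^ 2 + x ^ 2 := by
    nlinarith [h4, mul_pos (mul_pos (by norm_num : (0:ℝ) < 2) (mul_pos ha ha)) hcpos, sq_nonneg x]
  have hsinh : Real.sinh τ ^ 2 = (c - 1) / 2 := by
    have h1 := Real.cosh_two_mul τ
    have h2 := Real.cosh_sq τ
    rw [hc]
    linarith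
  constructor
  · rw [hsinh, div_le_div_iff₀ (by norm_num) (by positivity)]
    nlinarith [hca]
  · rw [hsinh, div_le_div_iff₀ (by norm_num) (by positivity)]
    nlinarith [hca2]

set_option maxHeartbeats 2000000 in
/-- With `τ_p` defined by `tanh(2τ_p) = -8π𝔞N^κ/(p² + 8π𝔞N^κ)` and `σ_p = sinh(τ_p)`,
one has `Σ_{p ∈ P_S} σ_p² ≤ C N^{3κ/2}` on the shell
`P_S = {p : N^{κ/2-ε} ≤ |p| ≤ N^{κ/2+ε}}`, with `C` depending only on `𝔞`. -/
theorem stmt2 (𝔞 : ℝ) (h𝔞 : 0 < 𝔞) :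
    ∃ C > 0, ∀ (κ N ε : ℝ) (τ : (Fin 3 → ℤ) → ℝ),
      0 < κ → κ < 1 → 2 ≤ N → 0 < ε → ε < κ / 2 →
      (∀ p : Fin 3 → ℤ, p ≠ 0 →
        Real.tanh (2 * τ p) =
          -(8 * Real.pi * 𝔞 * N ^ κ) / (‖latticePoint p‖ ^ 2 + 8 * Real.pi * 𝔞 * N ^ κ)) →
      ∑' p : {p : Fin 3 → ℤ //
          N ^ (κ / 2 - ε) ≤ ‖latticePoint p‖ ∧ ‖latticePoint p‖ ≤ N ^ (κ / 2 + ε)},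
        (Real.sinh (τ p.1)) ^ 2 ≤ C * N ^ (3 * κ / 2) := by
  have hπ := Real.pi_gt_three
  set y : ℝ := 8 * Real.pi * 𝔞 with hy
  have hy0 : 0 < y := by positivity
  refine ⟨52 * (y * Real.sqrt y + y), by positivity, ?_⟩
  intro κ N ε τ hκ hκ1 hN hε hεκ hτ
  have hN0 : (0 : ℝ) < N := by linarith
  have hN1 : (1 : ℝ) ≤ N := by linarith
  set x : ℝ := y * N ^ κ with hxdef
  have hNκ : (0 : ℝ) < N ^ κ := Real.rpow_pos_of_pos hN0 κ
  have hNκ1 : (1 : ℝ) ≤ N ^ κ := Real.one_le_rpow hN1 hκ.le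
  have hx0 : 0 < x := by positivity
  have hRHSpos : (0 : ℝ) < 52 * (y * Real.sqrt y + y) * N ^ (3 * κ / 2) := by
    have := Real.rpow_pos_of_pos hN0 (3 * κ / 2)
    positivity
  set S := {p : Fin 3 → ℤ //
      N ^ (κ / 2 - ε) ≤ ‖latticePoint p‖ ∧ ‖latticePoint p‖ ≤ N ^ (κ / 2 + ε)}
  by_cases hsum : Summable fun p : S => Real.sinh (τ p.1) ^ 2
  · refine Summable.tsum_le_of_sum_le hsum ?_
    intro F
    set F' : Finset (Fin 3 → ℤ) := F.image Subtype.val with hF'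
    have hsumeq : ∑ q ∈ F, Real.sinh (τ q.1) ^ 2 = ∑ p ∈ F', Real.sinh (τ p) ^ 2 := by
      rw [hF', Finset.sum_image (fun u _ v _ h => Subtype.ext h)]
    rw [hsumeq]
    -- each element of F' is nonzero and satisfies the per-point bound
    have hmem : ∀ p ∈ F', p ≠ 0 ∧ (1 : ℝ) ≤ (Mm p : ℝ) ∧
        ((Mm p : ℝ)) ^ 2 ≤ ‖latticePoint p‖ ^ 2 := by
      intro p hp
      rw [hF', Finset.mem_image] at hp
      obtain ⟨q, _, rfl⟩ := hp
      have hlow := q.2.1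
      have hnorm : (0 : ℝ) < ‖latticePoint q.1‖ :=
        lt_of_lt_of_le (Real.rpow_pos_of_pos hN0 _) hlow
      have hq0 : q.1 ≠ 0 := by
        intro h0
        rw [h0] at hnorm
        have : ‖latticePoint (0 : Fin 3 → ℤ)‖ ^ 2 = 0 := by
          rw [norm_latticePoint_sq]; simp
        nlinarith
      exact ⟨hq0, by exact_mod_cast Mm_pos hq0, Mm_sq_le q.1⟩
    -- the bounding function
    have hhnn : ∀ m, 0 ≤ bfun x m := by
      intro m
      apply div_nonneg _ (sq_nonneg _)
      exact le_min hx0.le (by positivity)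
    have hpoint : ∀ p ∈ F', Real.sinh (τ p) ^ 2 ≤ bfun x (Mm p) := by
      intro p hp
      obtain ⟨hp0, hM1, hMa⟩ := hmem p hp
      set a : ℝ := ‖latticePoint p‖ ^ 2 with hadef
      have ha : 0 < a := lt_of_lt_of_le (by nlinarith) hMa
      have ht : Real.tanh (2 * τ p) = -x / (a + x) := by
        rw [hτ p hp0]
      obtain ⟨hb1, hb2⟩ := sinh_sq_est hx0 ha ht
      have hM0 : (0 : ℝ) < (Mm p : ℝ) ^ 2 := by nlinarith
      have g1 : Real.sinh (τ p) ^ 2 ≤ x / (Mm p : ℝ) ^ 2 := by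
        refine le_trans hb1 ?_
        rw [div_le_div_iff₀ (by linarith) hM0]
        nlinarith
      have g2 : Real.sinh (τ p) ^ 2 ≤ x ^ 2 / ((Mm p : ℝ) ^ 2 * (Mm p : ℝ) ^ 2) := by
        refine le_trans hb2 ?_
        rw [div_le_div_iff₀ (by positivity) (by positivity)]
        nlinarith [sq_nonneg x, mul_le_mul hMa hMa hM0.le ha.le]
      rw [bfun, ← min_div_div_right hM0.le, div_div]
      exact le_min g1 g2
    have step1 : ∑ p ∈ F', Real.sinh (τ p) ^ 2 ≤ ∑ p ∈ F', bfun x (Mm p) :=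
      Finset.sum_le_sum hpoint
    set B : ℕ := F'.sup Mm with hB
    have hsubset : F' ⊆ box B \ box 0 := by
      intro p hp
      rw [Finset.mem_sdiff, mem_box, mem_box]
      refine ⟨Finset.le_sup hp, ?_⟩
      obtain ⟨hp0, -, -⟩ := hmem p hp
      have := Mm_pos hp0
      omega
    have step2 : ∑ p ∈ F', bfun x (Mm p) ≤ ∑ p ∈ box B \ box 0, bfun x (Mm p) :=
      Finset.sum_le_sum_of_subset_of_nonneg hsubset (fun p _ _ => hhnn _)
    have step3 := sum_box_le (bfun x) hhnn B
    have step4 : ∑ m ∈ Finset.Ioc 0 B, 26 * (m : ℝ) ^ 2 * bfun x m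
        = ∑ m ∈ Finset.Ioc 0 B, 26 * min x (x ^ 2 / (m : ℝ) ^ 2) := by
      refine Finset.sum_congr rfl fun m hm => ?_
      rw [Finset.mem_Ioc] at hm
      have hm0 : ((m : ℝ)) ^ 2 ≠ 0 := by
        have : (0:ℝ) < (m:ℝ) := by exact_mod_cast hm.1
        positivity
      rw [bfun]
      field_simp
      ring_nf
      exact mul_inv_cancel₀ (Nat.cast_ne_zero.mpr hm.1.ne')
    -- split the sum at K = max 1 ⌈√x⌉
    set K : ℕ := max 1 ⌈Real.sqrt x⌉₊ with hK
    have hK1 : 1 ≤ K := le_max_left _ _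
    have hKs : Real.sqrt x ≤ (K : ℝ) := by
      refine le_trans (Nat.le_ceil _) ?_
      exact_mod_cast Nat.le_max_right 1 ⌈Real.sqrt x⌉₊
    have hKs2 : (K : ℝ) ≤ Real.sqrt x + 2 := by
      have h1 : (⌈Real.sqrt x⌉₊ : ℝ) ≤ Real.sqrt x + 1 :=
        le_of_lt (Nat.ceil_lt_add_one (Real.sqrt_nonneg x))
      have h2 : ((max 1 ⌈Real.sqrt x⌉₊ : ℕ) : ℝ) = max (1:ℝ) (⌈Real.sqrt x⌉₊ : ℝ) := by
        push_cast; rfl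
      rw [hK, h2]
      apply max_le
      · nlinarith [Real.sqrt_nonneg x]
      · linarith
    set R : ℕ := max B K with hR
    have hKR : K ≤ R := le_max_right _ _
    have step5 : ∑ m ∈ Finset.Ioc 0 B, 26 * min x (x ^ 2 / (m : ℝ) ^ 2)
        ≤ ∑ m ∈ Finset.Ioc 0 R, 26 * min x (x ^ 2 / (m : ℝ) ^ 2) := by
      apply Finset.sum_le_sum_of_subset_of_nonneg
      · apply Finset.Ioc_subset_Ioc le_rfl (le_max_left _ _)
      · intro m _ _
        have : 0 ≤ min x (x ^ 2 / (m : ℝ) ^ 2) := le_min hx0.le (by positivity)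
        linarith
    have step6 : ∑ m ∈ Finset.Ioc 0 R, 26 * min x (x ^ 2 / (m : ℝ) ^ 2)
        ≤ 26 * ((K : ℝ) * x + x ^ 2 / (K : ℝ)) := by
      rw [← Finset.sum_Ioc_consecutive _ (Nat.zero_le K) hKR]
      have hA : ∑ m ∈ Finset.Ioc 0 K, 26 * min x (x ^ 2 / (m : ℝ) ^ 2) ≤ 26 * ((K : ℝ) * x) := by
        calc ∑ m ∈ Finset.Ioc 0 K, 26 * min x (x ^ 2 / (m : ℝ) ^ 2)
            ≤ ∑ m ∈ Finset.Ioc 0 K, 26 * x := by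
              refine Finset.sum_le_sum fun m _ => ?_
              have := min_le_left x (x ^ 2 / (m : ℝ) ^ 2)
              linarith
          _ = 26 * ((K : ℝ) * x) := by
              rw [Finset.sum_const, Nat.card_Ioc, nsmul_eq_mul, Nat.sub_zero]
              ring
      have hB2 : ∑ m ∈ Finset.Ioc K R, 26 * min x (x ^ 2 / (m : ℝ) ^ 2)
          ≤ 26 * (x ^ 2 / (K : ℝ)) := by
        have hK0 : (0 : ℝ) < (K : ℝ) := by exact_mod_cast hK1
        calc ∑ m ∈ Finset.Ioc K R, 26 * min x (x ^ 2 / (m : ℝ) ^ 2)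
            ≤ ∑ m ∈ Finset.Ioc K R, 26 * (x ^ 2 * (1 / (m : ℝ) ^ 2)) := by
              refine Finset.sum_le_sum fun m _ => ?_
              have := min_le_right x (x ^ 2 / (m : ℝ) ^ 2)
              have heq : x ^ 2 / (m : ℝ) ^ 2 = x ^ 2 * (1 / (m : ℝ) ^ 2) := by ring
              linarith [heq ▸ this]
          _ = 26 * x ^ 2 * ∑ m ∈ Finset.Ioc K R, (1 / (m : ℝ) ^ 2) := by
              rw [Finset.mul_sum]; exact Finset.sum_congr rfl fun m _ => by ring
          _ ≤ 26 * x ^ 2 * (1 / K - 1 / (max K R)) := by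
              apply mul_le_mul_of_nonneg_left (sum_Ioc_inv_sq_le K hK1 R) (by positivity)
          _ ≤ 26 * (x ^ 2 / (K : ℝ)) := by
              have h3 : (0 : ℝ) < ((max K R : ℕ) : ℝ) := by
                have : 1 ≤ max K R := le_trans hK1 (le_max_left _ _)
                exact_mod_cast this
              have h4 : (0 : ℝ) ≤ 1 / ((max K R : ℕ) : ℝ) := by positivity
              have h5 : 26 * x ^ 2 * (1 / (K:ℝ)) = 26 * (x ^ 2 / (K:ℝ)) := by ring
              nlinarith [sq_nonneg x]
      linarith
    -- put it together and estimate by x^{3/2}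
    have hsx : (0 : ℝ) < Real.sqrt x := Real.sqrt_pos.mpr hx0
    have hfinal1 : (K : ℝ) * x + x ^ 2 / (K : ℝ) ≤ 2 * x * Real.sqrt x + 2 * x := by
      have e1 : (K : ℝ) * x ≤ (Real.sqrt x + 2) * x :=
        mul_le_mul_of_nonneg_right hKs2 hx0.le
      have e2 : x ^ 2 / (K : ℝ) ≤ x ^ 2 / Real.sqrt x := by
        apply div_le_div_of_nonneg_left (by positivity) hsx hKs
      have e3 : x ^ 2 / Real.sqrt x = x * Real.sqrt x := by
        rw [div_eq_iff (ne_of_gt hsx)]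
        have := Real.mul_self_sqrt hx0.le
        nlinarith
      nlinarith
    -- express in terms of N powers
    have hsqx : Real.sqrt x = Real.sqrt y * N ^ (κ / 2) := by
      rw [hxdef, Real.sqrt_mul hy0.le]
      congr 1
      rw [show (N : ℝ) ^ κ = (N ^ (κ / 2)) ^ 2 by
        rw [← Real.rpow_natCast (N ^ (κ / 2)) 2, ← Real.rpow_mul hN0.le]
        norm_num]
      exact Real.sqrt_sq (Real.rpow_nonneg hN0.le _)
    have hxx : x * Real.sqrt x = y * Real.sqrt y * N ^ (3 * κ / 2) := by
      rw [hsqx, hxdef]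
      rw [show y * N ^ κ * (Real.sqrt y * N ^ (κ / 2)) =
        y * Real.sqrt y * (N ^ κ * N ^ (κ / 2)) by ring]
      rw [← Real.rpow_add hN0]
      ring_nf
    have hxle : x ≤ y * N ^ (3 * κ / 2) := by
      rw [hxdef]
      apply mul_le_mul_of_nonneg_left _ hy0.le
      exact Real.rpow_le_rpow_of_exponent_le hN1 (by linarith)
    have hN32 : (0 : ℝ) < N ^ (3 * κ / 2) := Real.rpow_pos_of_pos hN0 _
    calc ∑ p ∈ F', Real.sinh (τ p) ^ 2
        ≤ 26 * ((K : ℝ) * x + x ^ 2 / (K : ℝ)) := by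
          rw [step4] at step3
          linarith [step1, step2, step3, step5, step6]
      _ ≤ 26 * (2 * x * Real.sqrt x + 2 * x) := by linarith
      _ = 52 * (x * Real.sqrt x) + 52 * x := by ring
      _ ≤ 52 * (y * Real.sqrt y * N ^ (3 * κ / 2)) + 52 * (y * N ^ (3 * κ / 2)) := by
          rw [hxx]
          linarith
      _ = 52 * (y * Real.sqrt y + y) * N ^ (3 * κ / 2) := by ring
  · rw [tsum_eq_zero_of_not_summable hsum]
    exact hRHSpos.le
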